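/- arXiv:1811.04842 — 6 statements merged into one kernel-verified Lean document; each statement's English description precedes it below -/
import Mathlib

section
/- Let Q be an anchored vector bundle with a dull bracket ⟦·,·⟧ and dual Dorfman connection Δ. Then the Jacobiator of the dull bracket satisfies Jac_{⟦·,·⟧}(q₁,q₂,q₃) = R_Δ(q₁,q₂)* q₃ for all q₁,q₂,q₃ ∈ Γ(Q), where R_Δ(q₁,q₂)τ = Δ_{q₁}Δ_{q₂}τ − Δ_{q₂}Δ_{q₁}τ − Δ_{⟦q₁,q₂⟧}τ is the curvature of Δ and R_Δ(q₁,q₂)* denotes its dual endomorphism of Q. -/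
/-- The Jacobiator of a dull bracket equals the dual of the
curvature of the dual Dorfman connection:
`Jac(q₁,q₂,q₃) = R_Δ(q₁,q₂)^* q₃`, expressed via the duality pairing as
`⟨Jac(q₁,q₂,q₃), τ⟩ = ⟨q₃, R_Δ(q₁,q₂) τ⟩` for all `τ ∈ Γ(Q*)`. -/
theorem jacobiator_eq_dual_curvature
    (A : Type) [CommRing A] [Algebra ℝ A]
    (Q Qd : Type)
    [AddCommGroup Q] [Module ℝ Q] [Module A Q] [IsScalarTower ℝ A Q]
    [AddCommGroup Qd] [Module ℝ Qd] [Module A Qd] [IsScalarTower ℝ A Qd]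
    (ρ : Q →ₗ[A] Derivation ℝ A A)
    (pair : Q →ₗ[A] Qd →ₗ[A] A)
    (hndQd : ∀ τ : Qd, (∀ q : Q, pair q τ = 0) → τ = 0)
    (hndQ : ∀ q : Q, (∀ τ : Qd, pair q τ = 0) → q = 0)
    (br : Q →ₗ[ℝ] Q →ₗ[ℝ] Q)
    (hskew : ∀ q₁ q₂ : Q, br q₁ q₂ = - br q₂ q₁)
    (hanchor : ∀ q₁ q₂ : Q, ρ (br q₁ q₂) = ⁅ρ q₁, ρ q₂⁆)
    (hleib : ∀ (q₁ q₂ : Q) (f : A), br q₁ (f • q₂) = ρ q₁ f • q₂ + f • br q₁ q₂)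
    (Δ : Q →ₗ[ℝ] Qd →ₗ[ℝ] Qd)
    (hdual : ∀ (q q' : Q) (τ : Qd),
      ρ q (pair q' τ) = pair (br q q') τ + pair q' (Δ q τ)) :
    ∀ (q₁ q₂ q₃ : Q) (τ : Qd),
      pair (br (br q₁ q₂) q₃ + br (br q₂ q₃) q₁ + br (br q₃ q₁) q₂) τ
        = pair q₃ (Δ q₁ (Δ q₂ τ) - Δ q₂ (Δ q₁ τ) - Δ (br q₁ q₂) τ) := by
  intro q₁ q₂ q₃ τ
  have h1 := hdual (br q₁ q₂) q₃ τ
  have h2 := hdual q₁ (br q₂ q₃) τ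
  have h3 := hdual q₂ q₃ τ
  have h4 := hdual q₂ q₃ (Δ q₁ τ)
  have h5 := hdual q₂ (br q₁ q₃) τ
  have h6 := hdual q₁ q₃ τ
  have h7 := hdual q₁ q₃ (Δ q₂ τ)
  have ha : ρ (br q₁ q₂) (pair q₃ τ)
      = ρ q₁ (ρ q₂ (pair q₃ τ)) - ρ q₂ (ρ q₁ (pair q₃ τ)) := by
    rw [hanchor q₁ q₂]; rfl
  have h3' : ρ q₁ (ρ q₂ (pair q₃ τ))
      = ρ q₁ (pair (br q₂ q₃) τ) + ρ q₁ (pair q₃ (Δ q₂ τ)) := by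
    rw [h3, map_add]
  have h6' : ρ q₂ (ρ q₁ (pair q₃ τ))
      = ρ q₂ (pair (br q₁ q₃) τ) + ρ q₂ (pair q₃ (Δ q₁ τ)) := by
    rw [h6, map_add]
  rw [hskew (br q₂ q₃) q₁, hskew (br q₃ q₁) q₂, hskew q₃ q₁]
  simp only [map_add, map_neg, map_sub, LinearMap.add_apply, LinearMap.neg_apply,
    LinearMap.sub_apply]
  linear_combination -h1 + ha + h2 + h3' - h4 - h5 - h6' + h7
end

section
/- Let (𝖤 → M, ρ, ⟨·,·⟩, ⟦·,·⟧) satisfy the degenerate Courant algebroid axioms (CA1), (CA2), (CA3) with a nondegenerate pairing. Then axiom (CA5) holds: ⟦e₁, f e₂⟧ = f⟦e₁,e₂⟧ + (ρ(e₁)f) e₂ for all e₁, e₂ ∈ Γ(𝖤), f ∈ C^∞(M). -/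
/-- Uchino. If `(𝖤 → M, ρ, ⟨·,·⟩, ⟦·,·⟧)` satisfies the Courant
algebroid axioms (CA1), (CA2), (CA3) with a *nondegenerate* pairing, then axiom
(CA5) holds: `⟦e₁, f e₂⟧ = f ⟦e₁,e₂⟧ + (ρ(e₁) f) e₂`. -/
theorem CA5_follows_from_CA1_CA2_CA3
    (A : Type) [CommRing A] [Algebra ℝ A]
    (E : Type)
    [AddCommGroup E] [Module ℝ E] [Module A E] [IsScalarTower ℝ A E]
    (ρ : E →ₗ[A] Derivation ℝ A A)
    (pr : E →ₗ[A] E →ₗ[A] A)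
    (hsymm : ∀ e₁ e₂ : E, pr e₁ e₂ = pr e₂ e₁)
    (hnd : ∀ e : E, (∀ e' : E, pr e e' = 0) → e = 0)
    (Dm : A → E)
    (hDm : ∀ (f : A) (e : E), pr (Dm f) e = ρ e f)
    (bb : E →ₗ[ℝ] E →ₗ[ℝ] E)
    (CA1 : ∀ e₁ e₂ e₃ : E,
      bb e₁ (bb e₂ e₃) = bb (bb e₁ e₂) e₃ + bb e₂ (bb e₁ e₃))
    (CA2 : ∀ e₁ e₂ e₃ : E,
      ρ e₁ (pr e₂ e₃) = pr (bb e₁ e₂) e₃ + pr e₂ (bb e₁ e₃))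
    (CA3 : ∀ e₁ e₂ : E, bb e₁ e₂ + bb e₂ e₁ = Dm (pr e₁ e₂)) :
    ∀ (e₁ e₂ : E) (f : A), bb e₁ (f • e₂) = f • bb e₁ e₂ + ρ e₁ f • e₂ := by
  
  intro e₁ e₂ f
  have key : ∀ e₃ : E, pr (bb e₁ (f • e₂) - (f • bb e₁ e₂ + ρ e₁ f • e₂)) e₃ = 0 := by
    intro e₃
    have h2 := CA2 e₁ (f • e₂) e₃
    have h2' := CA2 e₁ e₂ e₃
    simp only [map_smul, LinearMap.smul_apply, smul_eq_mul, Derivation.leibniz,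
      map_sub, map_add, LinearMap.sub_apply, LinearMap.add_apply] at h2 ⊢
    linear_combination f * h2' - h2
  have := hnd _ key
  have h := sub_eq_zero.mp this
  exact h
end

section
/- Given a matched pair of a self-dual 2-representation of a Lie algebroid B on ∂_Q : Q* → Q with a split Lie 2-algebroid, assuming ρ_Q ∘ ∂_Q = ρ_B ∘ ∂_B, condition (M1), namely ∂_Q(Δ_q τ) = ∇_{∂_B τ} q + ⟦q, ∂_Q τ⟧ + ∂_B*⟨τ, ∇_· q⟩ for all q,τ, is equivalent to the condition (Δ_{∂_Q τ₁}τ₂ − ∇*_{∂_B τ₂}τ₁) + (Δ_{∂_Q τ₂}τ₁ − ∇*_{∂_B τ₁}τ₂) = ρ_Q* d⟨τ₁, ∂_Q τ₂⟩ for all τ₁, τ₂ ∈ Γ(Q*). -/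
/-- Assuming `ρ_Q ∘ ∂_Q = ρ_B ∘ ∂_B`, the matched pair
condition (M1), `∂_Q(Δ_q τ) = ∇_{∂_B τ} q + ⟦q, ∂_Q τ⟧ + ∂_B^*⟨τ, ∇_· q⟩`
(stated in weak, paired form), is equivalent to
`(Δ_{∂_Q τ₁}τ₂ − ∇^*_{∂_B τ₂}τ₁) + (Δ_{∂_Q τ₂}τ₁ − ∇^*_{∂_B τ₁}τ₂)
   = ρ_Q^* d⟨τ₁, ∂_Q τ₂⟩` for all `τ₁, τ₂ ∈ Γ(Q*)`. -/
theorem M1_iff_almost_C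
    (A : Type) [CommRing A] [Algebra ℝ A]
    (Q Qd B : Type)
    [AddCommGroup Q] [Module ℝ Q] [Module A Q] [IsScalarTower ℝ A Q]
    [AddCommGroup Qd] [Module ℝ Qd] [Module A Qd] [IsScalarTower ℝ A Qd]
    [AddCommGroup B] [Module ℝ B] [Module A B] [IsScalarTower ℝ A B]
    (ρQ : Q →ₗ[A] Derivation ℝ A A)
    (ρB : B →ₗ[A] Derivation ℝ A A)
    (pairQ : Q →ₗ[A] Qd →ₗ[A] A)
    (hndQ : ∀ q : Q, (∀ τ : Qd, pairQ q τ = 0) → q = 0)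
    (hndQd : ∀ τ : Qd, (∀ q : Q, pairQ q τ = 0) → τ = 0)
    (dQ : Qd →ₗ[A] Q) (dB : Qd →ₗ[A] B)
    -- self-duality ∂_Q^* = ∂_Q
    (hself : ∀ τ τ' : Qd, pairQ (dQ τ) τ' = pairQ (dQ τ') τ)
    -- assumption: the anchors agree
    (hanch : ∀ τ : Qd, ρQ (dQ τ) = ρB (dB τ))
    -- dull bracket and dual Dorfman connection
    (br : Q →ₗ[ℝ] Q →ₗ[ℝ] Q)
    (hskew : ∀ q₁ q₂ : Q, br q₁ q₂ = - br q₂ q₁)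
    (Δ : Q →ₗ[ℝ] Qd →ₗ[ℝ] Qd)
    (hdual : ∀ (q q' : Q) (τ : Qd),
      ρQ q (pairQ q' τ) = pairQ (br q q') τ + pairQ q' (Δ q τ))
    (DmQ : A → Qd)
    (hDmQ : ∀ (q : Q) (f : A), pairQ q (DmQ f) = ρQ q f)
    -- B-connection ∇ on Q and dual connection ∇^* on Q^*
    (conQ : B →ₗ[ℝ] Q →ₗ[ℝ] Q) (conQs : B →ₗ[ℝ] Qd →ₗ[ℝ] Qd)
    (hcondual : ∀ (b : B) (q : Q) (τ : Qd),
      ρB b (pairQ q τ) = pairQ (conQ b q) τ + pairQ q (conQs b τ))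
    (hcomm : ∀ (b : B) (τ : Qd), conQ b (dQ τ) = dQ (conQs b τ)) :
    -- (M1), weak form
    (∀ (q : Q) (τ τ' : Qd),
      pairQ (dQ (Δ q τ)) τ'
        = pairQ (conQ (dB τ) q) τ' + pairQ (br q (dQ τ)) τ'
          + pairQ (conQ (dB τ') q) τ)
    ↔
    (∀ τ₁ τ₂ : Qd,
      (Δ (dQ τ₁) τ₂ - conQs (dB τ₂) τ₁) + (Δ (dQ τ₂) τ₁ - conQs (dB τ₁) τ₂)
        = DmQ (pairQ (dQ τ₂) τ₁)) := by
  have hbr : ∀ (a b : Q) (τ : Qd), pairQ (br a b) τ = - pairQ (br b a) τ := by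
    intro a b τ
    rw [hskew]; simp
  have hanch' : ∀ (τ : Qd) (f : A), ρQ (dQ τ) f = ρB (dB τ) f := fun τ f => by
    rw [hanch]
  -- the key scalar identity
  have key : ∀ (q : Q) (τ₁ τ₂ : Qd),
      (pairQ q (Δ (dQ τ₁) τ₂) - pairQ q (conQs (dB τ₂) τ₁))
        + (pairQ q (Δ (dQ τ₂) τ₁) - pairQ q (conQs (dB τ₁) τ₂))
        - pairQ q (DmQ (pairQ (dQ τ₂) τ₁))
      = (pairQ (conQ (dB τ₂) q) τ₁ + pairQ (br q (dQ τ₂)) τ₁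
          + pairQ (conQ (dB τ₁) q) τ₂)
        - pairQ (dQ (Δ q τ₂)) τ₁ := by
    intro q τ₁ τ₂
    have h1 := hdual (dQ τ₁) q τ₂
    have h2 := hdual (dQ τ₂) q τ₁
    have h3 := hcondual (dB τ₂) q τ₁
    have h4 := hcondual (dB τ₁) q τ₂
    have h5 := hdual q (dQ τ₁) τ₂
    have h6 := hDmQ q (pairQ (dQ τ₂) τ₁)
    have h7 : pairQ (dQ (Δ q τ₂)) τ₁ = pairQ (dQ τ₁) (Δ q τ₂) := hself _ _
    have h8 : pairQ (dQ τ₂) τ₁ = pairQ (dQ τ₁) τ₂ := hself _ _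
    have h9 := hanch' τ₁ (pairQ q τ₂)
    have h10 := hanch' τ₂ (pairQ q τ₁)
    have h11 := hbr (dQ τ₁) q τ₂
    have h12 := hbr (dQ τ₂) q τ₁
    have h13 : ρQ q (pairQ (dQ τ₂) τ₁) = ρQ q (pairQ (dQ τ₁) τ₂) := by rw [h8]
    linear_combination (-1 : A) * h1 - h2 + h3 + h4 - h5 - h6 + h7 + h9 + h10 - h11 - h12 - h13
  constructor
  · intro hM1 τ₁ τ₂
    rw [← sub_eq_zero]
    apply hndQd
    intro q
    have hk := key q τ₁ τ₂
    have hm := hM1 q τ₂ τ₁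
    simp only [map_add, map_sub]
    linear_combination hk - hm
  · intro hC q τ τ'
    have hc := congrArg (fun x => pairQ q x) (hC τ' τ)
    simp only [map_add, map_sub] at hc
    have hk := key q τ' τ
    linear_combination hk - hc
end

section
/- Under the matched pair conditions of an LA-Courant algebroid, the core bracket ⟦τ₁,τ₂⟧_{Q*} = Δ_{∂_Q τ₁}τ₂ − ∇*_{∂_B τ₂}τ₁ satisfies ∂_Q⟦τ₁,τ₂⟧_{Q*} = ⟦∂_Q τ₁, ∂_Q τ₂⟧_Δ + ∂_B*⟨τ₂, ∇_·(∂_Q τ₁)⟩ for all τ₁, τ₂ ∈ Γ(Q*), where ⟦·,·⟧_Δ is the dull bracket on Γ(Q) and ⟨τ₂, ∇_·(∂_Q τ₁)⟩ ∈ Γ(B*) is given by b ↦ ⟨τ₂, ∇_b ∂_Q τ₁⟩. -/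
/-- Under the matched pair conditions of an LA-Courant
algebroid, the core bracket `⟦τ₁,τ₂⟧_{Q*} = Δ_{∂_Q τ₁}τ₂ − ∇^*_{∂_B τ₂}τ₁`
satisfies `∂_Q⟦τ₁,τ₂⟧_{Q*} = ⟦∂_Q τ₁, ∂_Q τ₂⟧_Δ + ∂_B^*⟨τ₂, ∇_·(∂_Q τ₁)⟩`,
stated here in weak form by pairing with an arbitrary `τ' ∈ Γ(Q*)` and using
`⟨∂_B^* β, τ'⟩ = ⟨β, ∂_B τ'⟩`. -/
theorem dQ_of_core_bracket
    (A : Type) [CommRing A] [Algebra ℝ A]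
    (Q Qd B : Type)
    [AddCommGroup Q] [Module ℝ Q] [Module A Q] [IsScalarTower ℝ A Q]
    [AddCommGroup Qd] [Module ℝ Qd] [Module A Qd] [IsScalarTower ℝ A Qd]
    [AddCommGroup B] [Module ℝ B] [Module A B] [IsScalarTower ℝ A B]
    (pairQ : Q →ₗ[A] Qd →ₗ[A] A)
    (dQ : Qd →ₗ[A] Q) (dB : Qd →ₗ[A] B)
    -- dull bracket ⟦·,·⟧_Δ and Dorfman connection Δ
    (br : Q →ₗ[ℝ] Q →ₗ[ℝ] Q)
    (Δ : Q →ₗ[ℝ] Qd →ₗ[ℝ] Qd)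
    -- B-connections ∇ on Q and ∇^* on Q^*, with ∇ ∘ ∂_Q = ∂_Q ∘ ∇^*
    (conQ : B →ₗ[ℝ] Q →ₗ[ℝ] Q) (conQs : B →ₗ[ℝ] Qd →ₗ[ℝ] Qd)
    (hcomm : ∀ (b : B) (τ : Qd), conQ b (dQ τ) = dQ (conQs b τ))
    -- (M1), weak form
    (hM1 : ∀ (q : Q) (τ τ' : Qd),
      pairQ (dQ (Δ q τ)) τ'
        = pairQ (conQ (dB τ) q) τ' + pairQ (br q (dQ τ)) τ'
          + pairQ (conQ (dB τ') q) τ) :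
    ∀ τ₁ τ₂ τ' : Qd,
      pairQ (dQ (Δ (dQ τ₁) τ₂ - conQs (dB τ₂) τ₁)) τ'
        = pairQ (br (dQ τ₁) (dQ τ₂)) τ' + pairQ (conQ (dB τ') (dQ τ₁)) τ₂ := by
  intro τ₁ τ₂ τ'
  have h := hM1 (dQ τ₁) τ₂ τ'
  have hc := hcomm (dB τ₂) τ₁
  simp only [map_sub, LinearMap.sub_apply, ← hc, h]
  ring
end

section
/- Let (𝔼, B, Q, M) be an LA-Courant algebroid with matched pair data as usual. Then the core Q* with anchor ρ_{Q*} = ρ_Q ∘ ∂_Q, map 𝒟 = ρ_Q* ∘ d, pairing ⟨τ₁,τ₂⟩_{Q*} = ⟨τ₁, ∂_Q τ₂⟩, and bracket ⟦τ₁,τ₂⟧_{Q*} = Δ_{∂_Q τ₁}τ₂ − ∇*_{∂_B τ₂}τ₁ satisfies the degenerate Courant algebroid axiom (CA2): ρ_{Q*}(τ₁)⟨τ₂,τ₃⟩_{Q*} = ⟨⟦τ₁,τ₂⟧_{Q*}, τ₃⟩_{Q*} + ⟨τ₂, ⟦τ₁,τ₃⟧_{Q*}⟩_{Q*} for all τ₁,τ₂,τ₃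 ∈ Γ(Q*). -/
/-- For an LA-Courant algebroid with matched pair data, the
core `Q*` with anchor `ρ_{Q*} = ρ_Q ∘ ∂_Q`, pairing
`⟨τ₁,τ₂⟩_{Q*} = ⟨τ₁, ∂_Q τ₂⟩` and bracket
`⟦τ₁,τ₂⟧_{Q*} = Δ_{∂_Q τ₁}τ₂ − ∇^*_{∂_B τ₂}τ₁` satisfies the degenerate
Courant algebroid axiom (CA2). -/
theorem core_CA2
    (A : Type) [CommRing A] [Algebra ℝ A]
    (Q Qd B : Type)
    [AddCommGroup Q] [Module ℝ Q] [Module A Q] [IsScalarTower ℝ A Q]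
    [AddCommGroup Qd] [Module ℝ Qd] [Module A Qd] [IsScalarTower ℝ A Qd]
    [AddCommGroup B] [Module ℝ B] [Module A B] [IsScalarTower ℝ A B]
    (ρQ : Q →ₗ[A] Derivation ℝ A A)
    (ρB : B →ₗ[A] Derivation ℝ A A)
    (pairQ : Q →ₗ[A] Qd →ₗ[A] A)
    (dQ : Qd →ₗ[A] Q) (dB : Qd →ₗ[A] B)
    -- self-duality ∂_Q^* = ∂_Q
    (hself : ∀ τ τ' : Qd, pairQ (dQ τ) τ' = pairQ (dQ τ') τ)
    -- the anchors agree: ρ_Q ∘ ∂_Q = ρ_B ∘ ∂_B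
    (hanch : ∀ τ : Qd, ρQ (dQ τ) = ρB (dB τ))
    -- dull bracket and dual Dorfman connection
    (br : Q →ₗ[ℝ] Q →ₗ[ℝ] Q)
    (Δ : Q →ₗ[ℝ] Qd →ₗ[ℝ] Qd)
    (hdual : ∀ (q q' : Q) (τ : Qd),
      ρQ q (pairQ q' τ) = pairQ (br q q') τ + pairQ q' (Δ q τ))
    -- B-connections ∇ on Q, ∇^* on Q^*, dual to each other and with
    -- ∇ ∘ ∂_Q = ∂_Q ∘ ∇^*
    (conQ : B →ₗ[ℝ] Q →ₗ[ℝ] Q) (conQs : B →ₗ[ℝ] Qd →ₗ[ℝ] Qd)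
    (hcondual : ∀ (b : B) (q : Q) (τ : Qd),
      ρB b (pairQ q τ) = pairQ (conQ b q) τ + pairQ q (conQs b τ))
    (hcomm : ∀ (b : B) (τ : Qd), conQ b (dQ τ) = dQ (conQs b τ))
    -- the identity ∂_Q⟦τ₁,τ₂⟧_{Q*} = ⟦∂_Qτ₁,∂_Qτ₂⟧_Δ + ∂_B^*⟨τ₂, ∇_·∂_Qτ₁⟩
    -- (weak form), consequence of (M1)
    (h13 : ∀ τ₁ τ₂ τ' : Qd,
      pairQ (dQ (Δ (dQ τ₁) τ₂ - conQs (dB τ₂) τ₁)) τ'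
        = pairQ (br (dQ τ₁) (dQ τ₂)) τ'
          + pairQ (conQ (dB τ') (dQ τ₁)) τ₂) :
    ∀ τ₁ τ₂ τ₃ : Qd,
      ρQ (dQ τ₁) (pairQ (dQ τ₃) τ₂)
        = pairQ (dQ τ₃) (Δ (dQ τ₁) τ₂ - conQs (dB τ₂) τ₁)
          + pairQ (dQ (Δ (dQ τ₁) τ₃ - conQs (dB τ₃) τ₁)) τ₂ := by
  intro τ₁ τ₂ τ₃
  rw [hdual, h13 τ₁ τ₃ τ₂, map_sub, hcomm, hself (conQs (dB τ₂) τ₁) τ₃]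
  ring
end

section
/- Let (𝔼, B, Q, M) be an LA-Courant algebroid with matched pair data. The core bracket ⟦τ₁,τ₂⟧_{Q*} = Δ_{∂_Q τ₁}τ₂ − ∇*_{∂_B τ₂}τ₁ satisfies the symmetrised identity (CA3): ⟦τ₁,τ₂⟧_{Q*} + ⟦τ₂,τ₁⟧_{Q*} = ρ_Q* d⟨τ₁, ∂_Q τ₂⟩ for all τ₁,τ₂ ∈ Γ(Q*). -/
/-- For an LA-Courant algebroid with matched pair data, the
core bracket `⟦τ₁,τ₂⟧_{Q*} = Δ_{∂_Q τ₁}τ₂ − ∇^*_{∂_B τ₂}τ₁` satisfies the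
symmetrised identity (CA3):
`⟦τ₁,τ₂⟧_{Q*} + ⟦τ₂,τ₁⟧_{Q*} = ρ_Q^* d⟨τ₁, ∂_Q τ₂⟩`. -/
theorem core_CA3
    (A : Type) [CommRing A] [Algebra ℝ A]
    (Q Qd B : Type)
    [AddCommGroup Q] [Module ℝ Q] [Module A Q] [IsScalarTower ℝ A Q]
    [AddCommGroup Qd] [Module ℝ Qd] [Module A Qd] [IsScalarTower ℝ A Qd]
    [AddCommGroup B] [Module ℝ B] [Module A B] [IsScalarTower ℝ A B]
    (ρQ : Q →ₗ[A] Derivation ℝ A A)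
    (ρB : B →ₗ[A] Derivation ℝ A A)
    (pairQ : Q →ₗ[A] Qd →ₗ[A] A)
    (hndQd : ∀ τ : Qd, (∀ q : Q, pairQ q τ = 0) → τ = 0)
    (dQ : Qd →ₗ[A] Q) (dB : Qd →ₗ[A] B)
    (hself : ∀ τ τ' : Qd, pairQ (dQ τ) τ' = pairQ (dQ τ') τ)
    (hanch : ∀ τ : Qd, ρQ (dQ τ) = ρB (dB τ))
    (br : Q →ₗ[ℝ] Q →ₗ[ℝ] Q)
    (hskew : ∀ q₁ q₂ : Q, br q₁ q₂ = - br q₂ q₁)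
    (Δ : Q →ₗ[ℝ] Qd →ₗ[ℝ] Qd)
    (hdual : ∀ (q q' : Q) (τ : Qd),
      ρQ q (pairQ q' τ) = pairQ (br q q') τ + pairQ q' (Δ q τ))
    (DmQ : A → Qd)
    (hDmQ : ∀ (q : Q) (f : A), pairQ q (DmQ f) = ρQ q f)
    (conQ : B →ₗ[ℝ] Q →ₗ[ℝ] Q) (conQs : B →ₗ[ℝ] Qd →ₗ[ℝ] Qd)
    (hcondual : ∀ (b : B) (q : Q) (τ : Qd),
      ρB b (pairQ q τ) = pairQ (conQ b q) τ + pairQ q (conQs b τ))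
    (hcomm : ∀ (b : B) (τ : Qd), conQ b (dQ τ) = dQ (conQs b τ))
    -- (M1), weak form
    (hM1 : ∀ (q : Q) (τ τ' : Qd),
      pairQ (dQ (Δ q τ)) τ'
        = pairQ (conQ (dB τ) q) τ' + pairQ (br q (dQ τ)) τ'
          + pairQ (conQ (dB τ') q) τ) :
    ∀ τ₁ τ₂ : Qd,
      (Δ (dQ τ₁) τ₂ - conQs (dB τ₂) τ₁) + (Δ (dQ τ₂) τ₁ - conQs (dB τ₁) τ₂)
        = DmQ (pairQ (dQ τ₂) τ₁) := by
  intro τ₁ τ₂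
  have key : ∀ q : Q,
      pairQ q ((Δ (dQ τ₁) τ₂ - conQs (dB τ₂) τ₁) + (Δ (dQ τ₂) τ₁ - conQs (dB τ₁) τ₂)
        - DmQ (pairQ (dQ τ₂) τ₁)) = 0 := by
    intro q
    have e1 := hdual (dQ τ₁) q τ₂
    have e2 := hdual (dQ τ₂) q τ₁
    have e3 := hcondual (dB τ₂) q τ₁
    have e4 := hcondual (dB τ₁) q τ₂
    have e5 := hdual q (dQ τ₂) τ₁
    have e6 := hM1 q τ₁ τ₂
    have e7 := hself (Δ q τ₁) τ₂
    have e8 := hDmQ q (pairQ (dQ τ₂) τ₁)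
    have a1 : ρQ (dQ τ₁) (pairQ q τ₂) = ρB (dB τ₁) (pairQ q τ₂) := by rw [hanch]
    have a2 : ρQ (dQ τ₂) (pairQ q τ₁) = ρB (dB τ₂) (pairQ q τ₁) := by rw [hanch]
    have hs1 : pairQ (br (dQ τ₁) q) τ₂ = - pairQ (br q (dQ τ₁)) τ₂ := by
      rw [hskew]; simp
    have hs2 : pairQ (br (dQ τ₂) q) τ₁ = - pairQ (br q (dQ τ₂)) τ₁ := by
      rw [hskew]; simp
    simp only [map_add, map_sub]
    linear_combination -e1 - e2 + e3 + e4 - e8 + a1 + a2 - e5 + e7 - e6 - hs1 - hs2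
  have h0 := hndQd _ key
  have := sub_eq_zero.mp h0
  exact this
end
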